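/- Let δ ∈ ℝ with 1 < δ < 2, let N ≥ 3 be an integer, h = 1/N, let α₀ ≥ 1/(δ−1) and α₁ ≥ 0, and let b₁, …, b_{N−1} and c₁, …, c_{N−1} be real numbers with c_j ≥ 0 for all j. Define the (N+1)×(N+1) real matrix A by its action on vectors v = (v₀, …, v_N): (Av)₀ = (1 + α₀/h) v₀ − (α₀/h) v₁; (Av)_N = −(α₁/h) v_{N−1} + (1 + α₁/h) v_N; and for 1 ≤ j ≤ N−1, (Av)_j = −(1/(h^δ Γ(3−δ))) Σ_{k=0}^{j−1} d_{j−k} (v_{k+2} − 2 v_{k+1} + v_k) + b_j D^ℵ v_j + c_j v_j, where d_r := (max(r,0))^{2−δ} − (max(r−1,0))^{2−δ} and D^ℵ v_j := (v_{j+1} − v_j)/h if b_j < 0 and (v_j − v_{j−1})/h if b_j ≥ 0. Then A is invertible and every entry of A^{−1} is nonnegative. -/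

import Mathlib

open MeasureTheory

section AUX

private lemma bern {s t : ℝ} (hs0 : 0 ≤ s) (hs1 : s ≤ 1) (ht0 : 0 ≤ t) :
    t ^ s ≤ 1 - s * (1 - t) := by
  have h := Real.geom_mean_le_arith_mean2_weighted hs0 (by linarith : (0:ℝ) ≤ 1 - s) ht0
    zero_le_one (by ring)
  rw [Real.one_rpow, mul_one, mul_one] at h
  linarith

private lemma midConvex {β x : ℝ} (hβ0 : 0 < β) (hβ1 : β < 1) (hx : 0 < x) :
    2 * (x+1) ^ (β-1) ≤ x ^ (β-1) + (x+2) ^ (β-1) := by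
  have h1 : (0:ℝ) < x + 1 := by linarith
  have h2 : (0:ℝ) < x + 2 := by linarith
  have hu : 0 < x ^ (β-1) := Real.rpow_pos_of_pos hx _
  have hw : 0 < (x+2) ^ (β-1) := Real.rpow_pos_of_pos h2 _
  have hc : 0 < (x+1) ^ (β-1) := Real.rpow_pos_of_pos h1 _
  have hprod : x ^ (β-1) * (x+2) ^ (β-1) = (x*(x+2)) ^ (β-1) := (Real.mul_rpow hx.le h2.le).symm
  have hgeo : ((x+1) ^ (β-1)) ^ (2:ℕ) ≤ x ^ (β-1) * (x+2) ^ (β-1) := by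
    rw [hprod]
    have hle : x*(x+2) ≤ (x+1) ^ (2:ℕ) := by nlinarith
    have hcmp : ((x+1) ^ (2:ℕ)) ^ (β-1) ≤ (x*(x+2)) ^ (β-1) :=
      Real.rpow_le_rpow_of_nonpos (by positivity) hle (by linarith)
    calc ((x+1) ^ (β-1)) ^ (2:ℕ)
        = ((x+1) ^ (2:ℕ)) ^ (β-1) := by
          rw [← Real.rpow_natCast ((x+1) ^ (β-1)) 2, ← Real.rpow_natCast (x+1) 2,
            ← Real.rpow_mul h1.le, ← Real.rpow_mul h1.le]
          norm_num
          ring_nf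
      _ ≤ _ := hcmp
  nlinarith [sq_nonneg (x ^ (β-1) - (x+2) ^ (β-1)), hgeo, hc, hu, hw]

private lemma keyPointwise {β M x : ℝ} (hβ0 : 0 < β) (hβ1 : β < 1) (hx : 1 < x) (hxM : x ≤ M) :
    (M+3-2*β) * x ^ (β-1) ≤ (M+2-β) * (x-1) ^ (β-1) := by
  set s : ℝ := 1 - β with hs
  have hs0 : 0 < s := by simp only [hs]; linarith
  have hs1 : s < 1 := by simp only [hs]; linarith
  have hx0 : (0:ℝ) < x := by linarith
  have hx1 : (0:ℝ) < x - 1 := by linarith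
  have hP : 0 < (x-1) ^ s := Real.rpow_pos_of_pos hx1 s
  have hQ : 0 < x ^ s := Real.rpow_pos_of_pos hx0 s
  have hbern : (1 - 1/x) ^ s ≤ 1 - s * (1/x) := by
    have h := bern hs0.le hs1.le (t := 1 - 1/x)
      (by rw [sub_nonneg, div_le_one hx0]; linarith)
    have h2 : 1 - (1 - 1/x) = 1/x := by ring
    rw [h2] at h
    exact h
  have ha : (x-1) ^ s ≤ x ^ s * (1 - s * (1/x)) := by
    have hmul : x - 1 = x * (1 - 1/x) := by field_simp
    rw [hmul, Real.mul_rpow hx0.le (by rw [sub_nonneg, div_le_one hx0]; linarith)]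
    exact mul_le_mul_of_nonneg_left hbern hQ.le
  have hb2 : (x+s) * (x-1) ^ s ≤ x * x ^ s := by
    have h1 : (x+s) * (x-1) ^ s ≤ (x+s) * (x ^ s * (1 - s * (1/x))) :=
      mul_le_mul_of_nonneg_left ha (by linarith)
    have h3 : (x+s) * (1 - s * (1/x)) ≤ x := by
      have hxne : x ≠ 0 := ne_of_gt hx0
      have expand : (x+s) * (1 - s * (1/x)) = x - s^2 * (1/x) := by field_simp; ring
      rw [expand]
      have hpos : 0 ≤ s^2 * (1/x) := by positivity
      linarith
    calc (x+s) * (x-1) ^ s ≤ (x+s) * (x ^ s * (1 - s * (1/x))) := h1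
      _ = x ^ s * ((x+s) * (1 - s * (1/x))) := by ring
      _ ≤ x ^ s * x := mul_le_mul_of_nonneg_left h3 hQ.le
      _ = x * x ^ s := by ring
  have hxb : x ^ (β-1) = (x ^ s)⁻¹ := by
    rw [show β - 1 = -s by simp only [hs]; ring, Real.rpow_neg hx0.le]
  have hx1b : (x-1) ^ (β-1) = ((x-1) ^ s)⁻¹ := by
    rw [show β - 1 = -s by simp only [hs]; ring, Real.rpow_neg hx1.le]
  rw [hxb, hx1b, ← div_eq_mul_inv, ← div_eq_mul_inv, div_le_div_iff₀ hQ hP]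
  -- goal: (M+3-2β) * (x-1)^s ≤ (M+2-β) * x^s
  have hM3 : (0:ℝ) ≤ M + 3 - 2*β := by linarith
  have hkey : (M+3-2*β) * x ≤ (M+2-β) * (x+s) := by
    have h5 : 0 ≤ s * (M + 2 - β - x) := mul_nonneg hs0.le (by linarith)
    simp only [hs] at h5 ⊢
    nlinarith [h5]
  have hc1 : (M+3-2*β) * ((x+s) * (x-1) ^ s) ≤ (M+3-2*β) * (x * x ^ s) :=
    mul_le_mul_of_nonneg_left hb2 hM3
  have hc2 : (M+3-2*β) * (x * x ^ s) ≤ ((M+2-β) * (x+s)) * x ^ s := by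
    calc (M+3-2*β) * (x * x ^ s) = ((M+3-2*β) * x) * x ^ s := by ring
      _ ≤ ((M+2-β) * (x+s)) * x ^ s := mul_le_mul_of_nonneg_right hkey hQ.le
  have hc3 : ((M+3-2*β) * (x-1) ^ s) * (x+s) ≤ ((M+2-β) * x ^ s) * (x+s) := by nlinarith [hc1, hc2]
  exact le_of_mul_le_mul_right hc3 (by linarith)

private lemma shiftInt {β : ℝ} (hβ0 : 0 < β) (c a b : ℝ) :
    IntervalIntegrable (fun x => (x+c) ^ (β-1)) volume a b := by
  have h := (intervalIntegral.intervalIntegrable_rpow' (a := a + c) (b := b + c)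
    (r := β - 1) (by linarith)).comp_sub_right (-c)
  simpa [sub_neg_eq_add] using h

private lemma shiftVal {β : ℝ} (hβ0 : 0 < β) (c a b : ℝ) :
    ∫ x in a..b, β * (x+c) ^ (β-1) = (b+c) ^ β - (a+c) ^ β := by
  rw [intervalIntegral.integral_const_mul]
  rw [intervalIntegral.integral_comp_add_right (fun y => y ^ (β-1)) c]
  rw [integral_rpow (Or.inl (by linarith))]
  rw [show β - 1 + 1 = β by ring]
  rw [mul_comm, div_mul_cancel₀ _ hβ0.ne']

private lemma shiftVal2 {β : ℝ} (hβ0 : 0 < β) (K c a b : ℝ) :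
    ∫ x in a..b, K * (β * (x+c) ^ (β-1)) = K * ((b+c) ^ β - (a+c) ^ β) := by
  rw [intervalIntegral.integral_const_mul, shiftVal hβ0]

private lemma intMono {f g : ℝ → ℝ} {a b : ℝ} (hab : a ≤ b)
    (hf : IntervalIntegrable f volume a b) (hg : IntervalIntegrable g volume a b)
    (hle : ∀ x ∈ Set.Ioc a b, f x ≤ g x) :
    ∫ x in a..b, f x ≤ ∫ x in a..b, g x := by
  rw [intervalIntegral.integral_of_le hab, intervalIntegral.integral_of_le hab]
  exact setIntegral_mono_on hf.1 hg.1 measurableSet_Ioc hle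

private lemma convD {β a : ℝ} (hβ0 : 0 < β) (hβ1 : β < 1) (ha : 0 ≤ a) :
    2 * ((a+2) ^ β - (a+1) ^ β) ≤ ((a+1) ^ β - a ^ β) + ((a+3) ^ β - (a+2) ^ β) := by
  have hint : ∀ c : ℝ, IntervalIntegrable (fun x => β * (x+c) ^ (β-1)) volume a (a+1) :=
    fun c => (shiftInt hβ0 c a (a+1)).const_mul β
  have hcomp : ∫ x in a..(a+1), 2 * (β * (x+1) ^ (β-1))
      ≤ ∫ x in a..(a+1), (β * (x+0) ^ (β-1) + β * (x+2) ^ (β-1)) := by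
    apply intMono (by linarith) ((hint 1).const_mul 2) ((hint 0).add (hint 2))
    intro x hx
    have hx0 : 0 < x := lt_of_le_of_lt ha hx.1
    have hmc := midConvex hβ0 hβ1 hx0
    rw [add_zero]
    nlinarith [hmc, hβ0]
  rw [shiftVal2 hβ0 2 1 a (a+1)] at hcomp
  rw [intervalIntegral.integral_add (hint 0) (hint 2)] at hcomp
  rw [shiftVal hβ0 0 a (a+1), shiftVal hβ0 2 a (a+1)] at hcomp
  have e1 : a + 1 + 1 = a + 2 := by ring
  have e2 : a + 1 + 2 = a + 3 := by ring
  have e3 : a + 1 + 0 = a + 1 := by ring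
  have e4 : a + 0 = a := by ring
  rw [e1, e2, e3, e4] at hcomp
  linarith

private lemma keyIneq {β M : ℝ} (hβ0 : 0 < β) (hβ1 : β < 1) (hM : 2 ≤ M) :
    (M+3-2*β) * (M ^ β - (M-1) ^ β) ≤ (M+2-β) * ((M-1) ^ β - (M-2) ^ β) := by
  have hint : ∀ c : ℝ, IntervalIntegrable (fun x => β * (x+c) ^ (β-1)) volume (M-1) M :=
    fun c => (shiftInt hβ0 c (M-1) M).const_mul β
  have hcomp : ∫ x in (M-1)..M, (M+3-2*β) * (β * (x+0) ^ (β-1))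
      ≤ ∫ x in (M-1)..M, (M+2-β) * (β * (x+(-1)) ^ (β-1)) := by
    apply intMono (by linarith) ((hint 0).const_mul _) ((hint (-1)).const_mul _)
    intro x hx
    have hx1 : 1 < x := by have := hx.1; linarith
    have hxM : x ≤ M := hx.2
    have hkp := keyPointwise hβ0 hβ1 hx1 hxM
    rw [add_zero, show x + (-1) = x - 1 by ring]
    calc (M+3-2*β) * (β * x ^ (β-1)) = β * ((M+3-2*β) * x ^ (β-1)) := by ring
      _ ≤ β * ((M+2-β) * (x-1) ^ (β-1)) := mul_le_mul_of_nonneg_left hkp hβ0.le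
      _ = (M+2-β) * (β * (x-1) ^ (β-1)) := by ring
  rw [shiftVal2 hβ0 (M+3-2*β) 0 (M-1) M, shiftVal2 hβ0 (M+2-β) (-1) (M-1) M] at hcomp
  have e1 : M + 0 = M := by ring
  have e2 : M - 1 + 0 = M - 1 := by ring
  have e3 : M + (-1) = M - 1 := by ring
  have e4 : M - 1 + (-1) = M - 2 := by ring
  rw [e1, e2, e3, e4] at hcomp
  exact hcomp

private lemma abel_sum (a b : ℕ → ℝ) (n : ℕ) :
    ∑ k ∈ Finset.range n, a k * (b (k+1) - b k)
      = a n * b n - a 0 * b 0 - ∑ k ∈ Finset.range n, (a (k+1) - a k) * b (k+1) := by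
  have h := Finset.sum_range_sub (fun k => a k * b k) n
  have h2 : ∀ k, a k * (b (k+1) - b k)
      = (a (k+1) * b (k+1) - a k * b k) - (a (k+1) - a k) * b (k+1) := fun k => by ring
  simp_rw [h2]
  rw [Finset.sum_sub_distrib, h]

end AUX

/-- The coefficients `d_r = (max(r,0))^{2−δ} − (max(r−1,0))^{2−δ}` of the standard
discretization of the Caputo derivative of order `δ ∈ (1,2)`. -/
noncomputable def dCoef (δ : ℝ) (r : ℕ) : ℝ :=
  (max (r:ℝ) 0) ^ (2 - δ) - (max ((r:ℝ) - 1) 0) ^ (2 - δ)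

set_option maxHeartbeats 1000000

theorem stmt15 (δ : ℝ) (hδ1 : 1 < δ) (hδ2 : δ < 2)
    (N : ℕ) (hN : 3 ≤ N) (h : ℝ) (hh : h = 1 / N)
    (α₀ α₁ : ℝ) (hα₀ : 1 / (δ - 1) ≤ α₀) (hα₁ : 0 ≤ α₁)
    (b c : ℕ → ℝ) (hc : ∀ j : ℕ, 1 ≤ j → j ≤ N - 1 → 0 ≤ c j)
    (A : Matrix (Fin (N + 1)) (Fin (N + 1)) ℝ)
    (hA0 : ∀ v : Fin (N + 1) → ℝ,
      A.mulVec v ⟨0, by omega⟩ = (1 + α₀ / h) * v ⟨0, by omega⟩ - (α₀ / h) * v ⟨1, by omega⟩)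
    (hAN : ∀ v : Fin (N + 1) → ℝ,
      A.mulVec v ⟨N, by omega⟩
        = -(α₁ / h) * v ⟨N - 1, by omega⟩ + (1 + α₁ / h) * v ⟨N, by omega⟩)
    (hAj : ∀ v : Fin (N + 1) → ℝ, ∀ j : ℕ, ∀ _hj1 : 1 ≤ j, ∀ hj2 : j ≤ N - 1,
      A.mulVec v ⟨j, by omega⟩
        = -(1 / (h ^ δ * Real.Gamma (3 - δ))) *
            (∑ k : Fin j, dCoef δ (j - (k:ℕ)) *
              (v ⟨(k:ℕ) + 2, by have := k.isLt; omega⟩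
                - 2 * v ⟨(k:ℕ) + 1, by have := k.isLt; omega⟩
                + v ⟨(k:ℕ), by have := k.isLt; omega⟩))
          + b j * (if b j < 0 then (v ⟨j + 1, by omega⟩ - v ⟨j, by omega⟩) / h
              else (v ⟨j, by omega⟩ - v ⟨j - 1, by omega⟩) / h)
          + c j * v ⟨j, by omega⟩) :
    IsUnit A.det ∧ ∀ i j : Fin (N + 1), 0 ≤ A⁻¹ i j := by
  classical
  have hβ0 : (0:ℝ) < 2 - δ := by linarith
  have hβ1 : (2:ℝ) - δ < 1 := by linarith
  have hNR : (3:ℝ) ≤ (N:ℝ) := by exact_mod_cast hN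
  have hhpos : 0 < h := by rw [hh]; positivity
  have hα₀pos : 0 < α₀ := lt_of_lt_of_le (div_pos one_pos (by linarith)) hα₀
  have hμpos : 0 < 1 / (h ^ δ * Real.Gamma (3 - δ)) := by
    have h1 : 0 < h ^ δ := Real.rpow_pos_of_pos hhpos δ
    have h2 : 0 < Real.Gamma (3 - δ) := Real.Gamma_pos_of_pos (by linarith)
    positivity
  have hD0 : dCoef δ 0 = 0 := by simp [dCoef]
  have hDval : ∀ r : ℕ, 1 ≤ r → dCoef δ r = (r:ℝ) ^ (2-δ) - ((r:ℝ)-1) ^ (2-δ) := by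
    intro r hr
    have h1 : (0:ℝ) ≤ (r:ℝ) := Nat.cast_nonneg r
    have h2 : (0:ℝ) ≤ (r:ℝ) - 1 := by
      have : (1:ℝ) ≤ (r:ℝ) := by exact_mod_cast hr
      linarith
    unfold dCoef
    rw [max_eq_left h1, max_eq_left h2]
  have hD1 : dCoef δ 1 = 1 := by
    rw [hDval 1 le_rfl]
    norm_num [Real.zero_rpow (ne_of_gt hβ0), Real.one_rpow]
  have hDnn : ∀ r : ℕ, 0 ≤ dCoef δ r := by
    intro r
    rcases Nat.eq_zero_or_pos r with h0 | h1
    · rw [h0, hD0]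
    · rw [hDval r h1]
      have h2 : (0:ℝ) ≤ (r:ℝ) - 1 := by
        have : (1:ℝ) ≤ (r:ℝ) := by exact_mod_cast h1
        linarith
      have := Real.rpow_le_rpow h2 (by linarith : (r:ℝ)-1 ≤ (r:ℝ)) hβ0.le
      linarith
  have hDconv : ∀ r : ℕ, 1 ≤ r → 2 * dCoef δ (r+1) ≤ dCoef δ r + dCoef δ (r+2) := by
    intro r hr
    have hr1 : (1:ℝ) ≤ (r:ℝ) := by exact_mod_cast hr
    have hcv := convD hβ0 hβ1 (a := (r:ℝ) - 1) (by linarith)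
    rw [hDval r hr, hDval (r+1) (by omega), hDval (r+2) (by omega)]
    push_cast
    have e1 : (r:ℝ) - 1 + 1 = (r:ℝ) := by ring
    have e2 : (r:ℝ) - 1 + 2 = (r:ℝ) + 1 := by ring
    have e3 : (r:ℝ) - 1 + 3 = (r:ℝ) + 2 := by ring
    rw [e1, e2, e3] at hcv
    have e4 : (r:ℝ) + 1 - 1 = (r:ℝ) := by ring
    have e5 : (r:ℝ) + 2 - 1 = (r:ℝ) + 1 := by ring
    rw [e4, e5]
    linarith
  have hKey : ∀ j : ℕ, 2 ≤ j → j + 1 ≤ N →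
      (2 * dCoef δ j - dCoef δ (j-1)) * (1 + h / α₀) ≤ dCoef δ j := by
    intro j hj2 hjN
    have hM2 : (2:ℝ) ≤ (j:ℝ) := by exact_mod_cast hj2
    have hDj : dCoef δ j = (j:ℝ) ^ (2-δ) - ((j:ℝ)-1) ^ (2-δ) := hDval j (by omega)
    have hDj1 : dCoef δ (j-1) = ((j:ℝ)-1) ^ (2-δ) - ((j:ℝ)-2) ^ (2-δ) := by
      rw [hDval (j-1) (by omega)]
      have c1 : ((j-1 : ℕ):ℝ) = (j:ℝ) - 1 := by
        push_cast [Nat.cast_sub (by omega : 1 ≤ j)]; ring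
      rw [c1]
      ring_nf
    have hk := keyIneq hβ0 hβ1 hM2
    rw [← hDj, ← hDj1] at hk
    -- hk : ((j:ℝ)+3-2*(2-δ)) * dCoef δ j ≤ ((j:ℝ)+2-(2-δ)) * dCoef δ (j-1)
    rcases le_or_gt (2 * dCoef δ j - dCoef δ (j-1)) 0 with hsgn | hsgn
    · have h1p : (0:ℝ) < 1 + h/α₀ := by positivity
      have := mul_nonpos_iff.2 (Or.inr ⟨hsgn, h1p.le⟩)
      linarith [hDnn j]
    · have hMN : (j:ℝ) + 1 ≤ (N:ℝ) := by exact_mod_cast hjN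
      have hstep : h / α₀ ≤ (δ-1) / ((j:ℝ)+1) := by
        have hd1 : (0:ℝ) < δ - 1 := by linarith
        have h1 : 1 ≤ α₀ * (δ-1) := by
          rw [div_le_iff₀ hd1] at hα₀
          linarith
        have h2 : h / α₀ ≤ h * (δ-1) := by
          rw [div_le_iff₀ hα₀pos]
          nlinarith
        have h3 : h * (δ-1) = (δ-1) / (N:ℝ) := by
          rw [hh]; field_simp
        have h4 : (δ-1) / (N:ℝ) ≤ (δ-1) / ((j:ℝ)+1) :=
          div_le_div_of_nonneg_left hd1.le (by linarith) hMN
        linarith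
      have hchain : (2 * dCoef δ j - dCoef δ (j-1)) * (1 + h/α₀)
          ≤ (2 * dCoef δ j - dCoef δ (j-1)) * (1 + (δ-1)/((j:ℝ)+1)) :=
        mul_le_mul_of_nonneg_left (by linarith) hsgn.le
      have hM1 : (0:ℝ) < (j:ℝ) + 1 := by linarith
      have hlast : (2 * dCoef δ j - dCoef δ (j-1)) * (1 + (δ-1)/((j:ℝ)+1)) ≤ dCoef δ j := by
        rw [show 1 + (δ-1)/((j:ℝ)+1) = ((j:ℝ)+δ)/((j:ℝ)+1) by field_simp; ring]
        rw [← mul_div_assoc, div_le_iff₀ hM1]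
        nlinarith [hk]
      linarith
  -- the monotonicity (inverse-positivity) of A
  have mono : ∀ v : Fin (N+1) → ℝ, (∀ i, 0 ≤ A.mulVec v i) → ∀ i, 0 ≤ v i := by
    intro v hv
    by_contra hcon
    push_neg at hcon
    obtain ⟨i0, hi0⟩ := hcon
    set S : Finset (Fin (N+1)) := Finset.univ.filter (fun i => ∀ k, v i ≤ v k) with hS
    have hSne : S.Nonempty := by
      obtain ⟨m₀, _, hm₀⟩ := Finset.exists_min_image Finset.univ v ⟨i0, Finset.mem_univ i0⟩
      exact ⟨m₀, Finset.mem_filter.2 ⟨Finset.mem_univ _, fun k => hm₀ k (Finset.mem_univ k)⟩⟩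
    obtain ⟨m, hmS, hmax⟩ : ∃ m ∈ S, ∀ i ∈ S, i ≤ m :=
      ⟨S.max' hSne, S.max'_mem hSne, fun i hi => S.le_max' i hi⟩
    have hmin : ∀ k, v m ≤ v k := (Finset.mem_filter.1 hmS).2
    have hneg : v m < 0 := lt_of_le_of_lt (hmin i0) hi0
    have hgt : ∀ i : Fin (N+1), m < i → v m < v i := by
      intro i hi
      rcases lt_or_eq_of_le (hmin i) with h' | h'
      · exact h'
      · exfalso
        have hiS : i ∈ S := Finset.mem_filter.2 ⟨Finset.mem_univ _, fun k => h' ▸ hmin k⟩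
        exact absurd (hmax i hiS) (not_le.2 hi)
    by_cases hm0 : m.1 = 0
    · -- minimum at the left boundary
      have p0 : (0:ℕ) < N+1 := by omega
      have p1 : (1:ℕ) < N+1 := by omega
      have hmeq : m = (⟨0, p0⟩ : Fin (N+1)) := Fin.ext hm0
      have h00 := hv (⟨0, p0⟩ : Fin (N+1))
      rw [hA0 v] at h00
      have h00' : 0 ≤ (1 + α₀ / h) * v ⟨0, p0⟩ - (α₀ / h) * v ⟨1, p1⟩ := h00
      have hv1 : v (⟨0, p0⟩ : Fin (N+1)) ≤ v (⟨1, p1⟩ : Fin (N+1)) := hmeq ▸ hmin ⟨1, p1⟩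
      have hneg' : v (⟨0, p0⟩ : Fin (N+1)) < 0 := hmeq ▸ hneg
      have hq : 0 < α₀ / h := div_pos hα₀pos hhpos
      nlinarith [mul_le_mul_of_nonneg_left hv1 hq.le, h00', hneg']
    · by_cases hmN : m.1 = N
      · -- minimum at the right boundary
        have pN : N < N+1 := by omega
        have pN1 : N-1 < N+1 := by omega
        have hmeq : m = (⟨N, pN⟩ : Fin (N+1)) := Fin.ext hmN
        have h00 := hv (⟨N, pN⟩ : Fin (N+1))
        rw [hAN v] at h00
        have h00' : 0 ≤ -(α₁ / h) * v ⟨N - 1, pN1⟩ + (1 + α₁ / h) * v ⟨N, pN⟩ := h00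
        have hv1 : v (⟨N, pN⟩ : Fin (N+1)) ≤ v (⟨N-1, pN1⟩ : Fin (N+1)) := hmeq ▸ hmin ⟨N-1, pN1⟩
        have hneg' : v (⟨N, pN⟩ : Fin (N+1)) < 0 := hmeq ▸ hneg
        have hq' : 0 ≤ α₁ / h := div_nonneg hα₁ hhpos.le
        nlinarith [mul_le_mul_of_nonneg_left hv1 hq', h00', hneg']
      · -- interior minimum
        obtain ⟨j, hlt, hj1, hj2, hmeq⟩ :
            ∃ (j : ℕ) (hlt : j < N + 1), 1 ≤ j ∧ j ≤ N - 1 ∧ m = ⟨j, hlt⟩ := by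
          refine ⟨m.1, m.2, by omega, by omega, rfl⟩
        subst hmeq
        -- the shifted nonnegative vector w
        obtain ⟨w, hwdef⟩ : ∃ w : ℕ → ℝ,
            ∀ i : ℕ, w i = if hi : i ≤ N then v ⟨i, by omega⟩ - v ⟨j, hlt⟩ else 0 :=
          ⟨fun i => if hi : i ≤ N then v ⟨i, by omega⟩ - v ⟨j, hlt⟩ else 0, fun i => rfl⟩
        have hwnn : ∀ i, 0 ≤ w i := by
          intro i
          rw [hwdef i]
          split_ifs with hi
          · exact sub_nonneg.2 (hmin _)
          · exact le_rfl
        have hwj0 : w j = 0 := by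
          rw [hwdef j, dif_pos (by omega : j ≤ N)]
          exact sub_eq_zero_of_eq rfl
        have hwj1pos : 0 < w (j+1) := by
          rw [hwdef (j+1), dif_pos (by omega : j + 1 ≤ N)]
          have hlt2 : (⟨j, hlt⟩ : Fin (N+1)) < ⟨j+1, by omega⟩ :=
            Fin.mk_lt_mk.mpr (by omega)
          exact sub_pos.2 (hgt _ hlt2)
        have hvw : ∀ (i : ℕ) (pf : i < N+1), v ⟨i, pf⟩ = w i + v ⟨j, hlt⟩ := by
          intro i pf
          rw [hwdef i, dif_pos (by omega : i ≤ N)]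
          exact (sub_add_cancel _ _).symm
        -- row j of the system
        have h0 := hv (⟨j, hlt⟩ : Fin (N+1))
        rw [hAj v j hj1 hj2] at h0
        -- hide the value of the minimum behind a fresh name
        obtain ⟨vm, hvm⟩ : ∃ x : ℝ, v ⟨j, hlt⟩ = x := ⟨_, rfl⟩
        rw [hvm] at hneg
        have hvw' : ∀ (i : ℕ) (pf : i < N+1), v ⟨i, pf⟩ = w i + vm := by
          intro i pf; rw [hvw i pf, hvm]
        simp only [hvw'] at h0
        -- convert the Fin-sum to a range-sum in telescoping form
        have hsum : (∑ k : Fin j, dCoef δ (j - (k:ℕ)) *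
              ((w ((k:ℕ)+2) + vm) - 2 * (w ((k:ℕ)+1) + vm) + (w (k:ℕ) + vm)))
            = ∑ k ∈ Finset.range j,
                dCoef δ (j-k) * ((w (k+1+1) - w (k+1)) - (w (k+1) - w k)) := by
          rw [← Fin.sum_univ_eq_sum_range
            (fun k => dCoef δ (j-k) * ((w (k+1+1) - w (k+1)) - (w (k+1) - w k))) j]
          apply Finset.sum_congr rfl
          intro k _
          have e : (k:ℕ) + 1 + 1 = (k:ℕ) + 2 := by omega
          rw [e]
          ring
        rw [hsum] at h0
        set Sv : ℝ := ∑ k ∈ Finset.range j,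
            dCoef δ (j-k) * ((w (k+1+1) - w (k+1)) - (w (k+1) - w k)) with hSvdef
        -- Abel summation, twice
        have habel1 : Sv = -(dCoef δ j * (w 1 - w 0))
            - ∑ k ∈ Finset.range j,
                (dCoef δ (j-(k+1)) - dCoef δ (j-k)) * (w (k+1+1) - w (k+1)) := by
          rw [hSvdef, abel_sum (fun k => dCoef δ (j - k)) (fun k => w (k+1) - w k) j]
          rw [Nat.sub_self, hD0, Nat.sub_zero]
          simp only [zero_add]
          ring
        have habel2 : (∑ k ∈ Finset.range j,
              (dCoef δ (j-(k+1)) - dCoef δ (j-k)) * (w (k+1+1) - w (k+1)))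
            = -((dCoef δ (j-1) - dCoef δ j) * w 1)
              - ∑ k ∈ Finset.range j,
                  ((dCoef δ (j-(k+1+1)) - dCoef δ (j-(k+1)))
                    - (dCoef δ (j-(k+1)) - dCoef δ (j-k))) * w (k+1+1) := by
          rw [abel_sum (fun k => dCoef δ (j-(k+1)) - dCoef δ (j-k)) (fun k => w (k+1)) j]
          have z1 : j - (j+1) = 0 := by omega
          rw [z1, Nat.sub_self, hD0]
          simp only [zero_add, Nat.sub_zero]
          ring
        -- lower bound for the remaining sum
        have hbound : w (j+1) ≤ ∑ k ∈ Finset.range j,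
            ((dCoef δ (j-(k+1+1)) - dCoef δ (j-(k+1)))
              - (dCoef δ (j-(k+1)) - dCoef δ (j-k))) * w (k+1+1) := by
          have hsingle : (∑ k ∈ Finset.range j,
              (if k = j-1 then w (j+1) else 0)) = w (j+1) := by
            rw [Finset.sum_ite_eq' (Finset.range j) (j-1) (fun _ => w (j+1))]
            rw [if_pos (Finset.mem_range.2 (by omega))]
          rw [← hsingle]
          apply Finset.sum_le_sum
          intro k hk
          rw [Finset.mem_range] at hk
          by_cases hkj : k = j-1
          · rw [if_pos hkj, hkj]
            have z1 : j - 1 + 1 + 1 = j + 1 := by omega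
            have z2 : j - (j-1+1) = 0 := by omega
            have z3 : j - (j-1+1+1) = 0 := by omega
            have z4 : j - (j-1) = 1 := by omega
            rw [z3, z2, z4, z1, hD0, hD1]
            norm_num
          · rw [if_neg hkj]
            by_cases hkj2 : k = j - 2
            · have z : k + 1 + 1 = j := by omega
              rw [z, hwj0, mul_zero]
            · have hr : 1 ≤ j - (k+1+1) := by omega
              have z1 : j - (k+1) = (j - (k+1+1)) + 1 := by omega
              have z2 : j - k = (j - (k+1+1)) + 2 := by omega
              rw [z1, z2]
              apply mul_nonneg _ (hwnn _)
              linarith [hDconv (j - (k+1+1)) hr]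
        -- sign information for the convection and reaction terms
        split_ifs at h0 with hbj
        · -- upwinded difference, b j < 0
          have hnum : 0 ≤ ((w (j+1) + vm) - (w j + vm)) / h :=
            div_nonneg (by linarith [hwnn (j+1), hwj0]) hhpos.le
          have hbt : b j * (((w (j+1) + vm) - (w j + vm)) / h) ≤ 0 :=
            mul_nonpos_iff.2 (Or.inr ⟨hbj.le, hnum⟩)
          have hct : c j * (w j + vm) ≤ 0 := by
            rw [hwj0, zero_add]
            exact mul_nonpos_iff.2 (Or.inl ⟨hc j hj1 hj2, hneg.le⟩)
          have hμS : (1/(h^δ * Real.Gamma (3-δ))) * Sv ≤ 0 := by linarith only [h0, hbt, hct]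
          have hSle0 : Sv ≤ 0 := by
            by_contra hpos
            push_neg at hpos
            linarith only [mul_pos hμpos hpos, hμS]
          have hfinal : w (j+1) ≤ (2*dCoef δ j - dCoef δ (j-1)) * w 1 - dCoef δ j * w 0 := by
            linarith only [hSle0, habel1, habel2, hbound]
          rcases le_or_gt (2 * dCoef δ j - dCoef δ (j-1)) 0 with hsgn | hsgn
          · linarith only [hwj1pos, hfinal, hwnn 1, hwnn 0,
              mul_nonpos_iff.2 (Or.inr ⟨hsgn, hwnn 1⟩),
              mul_nonneg (hDnn j) (hwnn 0)]
          · by_cases hj1' : j = 1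
            · have hw10 : w 1 = 0 := hj1' ▸ hwj0
              have hz : (2*dCoef δ j - dCoef δ (j-1)) * w 1 = 0 := by rw [hw10, mul_zero]
              linarith [hwj1pos, hfinal, hz, mul_nonneg (hDnn j) (hwnn 0)]
            · have hj2' : 2 ≤ j := by omega
              have hkey := hKey j hj2' (by omega)
              -- bound w 1 by w 0 using row 0
              have h00 := hv (⟨0, by omega⟩ : Fin (N+1))
              rw [hA0 v] at h00
              rw [hvw' 0 (by omega), hvw' 1 (by omega)] at h00
              have hq : 0 < α₀ / h := div_pos hα₀pos hhpos
              have hw1b : w 1 ≤ (1 + h/α₀) * w 0 := by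
                have h6 : (α₀/h) * (w 1 - w 0) ≤ w 0 := by linarith only [h00, hneg]
                have h7 : w 1 - w 0 ≤ w 0 / (α₀/h) :=
                  (le_div_iff₀ hq).2 (by linarith [h6])
                have h8 : w 0 / (α₀/h) = (h/α₀) * w 0 := by
                  rw [div_eq_mul_inv, inv_div]; ring
                rw [h8] at h7
                linarith only [h7]
              have c1 : (2*dCoef δ j - dCoef δ (j-1)) * w 1
                  ≤ (2*dCoef δ j - dCoef δ (j-1)) * ((1 + h/α₀) * w 0) :=
                mul_le_mul_of_nonneg_left hw1b hsgn.le
              have c3 : ((2*dCoef δ j - dCoef δ (j-1)) * (1 + h/α₀)) * w 0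
                  ≤ dCoef δ j * w 0 :=
                mul_le_mul_of_nonneg_right hkey (hwnn 0)
              linarith only [hwj1pos, hfinal, c1, c3]
        · -- upwinded difference, 0 ≤ b j
          have hnum : ((w j + vm) - (w (j-1) + vm)) / h ≤ 0 :=
            div_nonpos_of_nonpos_of_nonneg (by linarith [hwnn (j-1), hwj0]) hhpos.le
          have hbt : b j * (((w j + vm) - (w (j-1) + vm)) / h) ≤ 0 :=
            mul_nonpos_iff.2 (Or.inl ⟨not_lt.1 hbj, hnum⟩)
          have hct : c j * (w j + vm) ≤ 0 := by
            rw [hwj0, zero_add]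
            exact mul_nonpos_iff.2 (Or.inl ⟨hc j hj1 hj2, hneg.le⟩)
          have hμS : (1/(h^δ * Real.Gamma (3-δ))) * Sv ≤ 0 := by linarith only [h0, hbt, hct]
          have hSle0 : Sv ≤ 0 := by
            by_contra hpos
            push_neg at hpos
            linarith only [mul_pos hμpos hpos, hμS]
          have hfinal : w (j+1) ≤ (2*dCoef δ j - dCoef δ (j-1)) * w 1 - dCoef δ j * w 0 := by
            linarith only [hSle0, habel1, habel2, hbound]
          rcases le_or_gt (2 * dCoef δ j - dCoef δ (j-1)) 0 with hsgn | hsgn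
          · linarith only [hwj1pos, hfinal, hwnn 1, hwnn 0,
              mul_nonpos_iff.2 (Or.inr ⟨hsgn, hwnn 1⟩),
              mul_nonneg (hDnn j) (hwnn 0)]
          · by_cases hj1' : j = 1
            · have hw10 : w 1 = 0 := hj1' ▸ hwj0
              have hz : (2*dCoef δ j - dCoef δ (j-1)) * w 1 = 0 := by rw [hw10, mul_zero]
              linarith [hwj1pos, hfinal, hz, mul_nonneg (hDnn j) (hwnn 0)]
            · have hj2' : 2 ≤ j := by omega
              have hkey := hKey j hj2' (by omega)
              have h00 := hv (⟨0, by omega⟩ : Fin (N+1))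
              rw [hA0 v] at h00
              rw [hvw' 0 (by omega), hvw' 1 (by omega)] at h00
              have hq : 0 < α₀ / h := div_pos hα₀pos hhpos
              have hw1b : w 1 ≤ (1 + h/α₀) * w 0 := by
                have h6 : (α₀/h) * (w 1 - w 0) ≤ w 0 := by linarith only [h00, hneg]
                have h7 : w 1 - w 0 ≤ w 0 / (α₀/h) :=
                  (le_div_iff₀ hq).2 (by linarith [h6])
                have h8 : w 0 / (α₀/h) = (h/α₀) * w 0 := by
                  rw [div_eq_mul_inv, inv_div]; ring
                rw [h8] at h7
                linarith only [h7]
              have c1 : (2*dCoef δ j - dCoef δ (j-1)) * w 1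
                  ≤ (2*dCoef δ j - dCoef δ (j-1)) * ((1 + h/α₀) * w 0) :=
                mul_le_mul_of_nonneg_left hw1b hsgn.le
              have c3 : ((2*dCoef δ j - dCoef δ (j-1)) * (1 + h/α₀)) * w 0
                  ≤ dCoef δ j * w 0 :=
                mul_le_mul_of_nonneg_right hkey (hwnn 0)
              linarith only [hwj1pos, hfinal, c1, c3]
  -- conclusion
  have hdetne : A.det ≠ 0 := by
    intro hdet0
    rw [← Matrix.exists_mulVec_eq_zero_iff] at hdet0
    obtain ⟨v, hvne, hv0⟩ := hdet0
    apply hvne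
    funext i
    have h1 := mono v (fun i => by rw [hv0]; exact le_rfl) i
    have h2 := mono (-v) (fun i => by rw [Matrix.mulVec_neg, hv0]; simp) i
    simp only [Pi.neg_apply] at h2
    have : v i = 0 := le_antisymm (by linarith) h1
    simpa using this
  have hunit : IsUnit A.det := isUnit_iff_ne_zero.2 hdetne
  refine ⟨hunit, fun i jj => ?_⟩
  apply mono (fun k => A⁻¹ k jj)
  intro i'
  have hone : A.mulVec (fun k => A⁻¹ k jj) i' = (A * A⁻¹) i' jj := by
    simp [Matrix.mulVec, Matrix.mul_apply, dotProduct]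
  rw [hone, Matrix.mul_nonsing_inv A hunit]
  by_cases h' : i' = jj <;> simp [Matrix.one_apply, h']
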